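/- Suppose the feasible region {x ∈ ℝⁿ : A x = b, x ≥ 0} is nonempty. Then for every x ∈ ℝⁿ with x > 0 componentwise, the vector q = W Aᵀ L⁻¹ b (where W = diag(x₁/c₁,…,xₙ/cₙ) and L = A W Aᵀ) satisfies ‖q‖_∞ ≤ 𝒟² · n · ‖b‖₁, where 𝒟 = max{|det A'| : A' is a square submatrix of A}. -/

import Mathlib

open Matrix Filter Set Topology

/-- The real matrix obtained from an integer matrix by coercion of entries. -/
noncomputable def rmat {m n : ℕ} (A : Matrix (Fin m) (Fin n) ℤ) :
    Matrix (Fin m) (Fin n) ℝ :=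
  A.map (Int.cast : ℤ → ℝ)

/-- The diagonal matrix `W = diag (x i / c i)`. -/
noncomputable def physW {n : ℕ} (c x : Fin n → ℝ) : Matrix (Fin n) (Fin n) ℝ :=
  Matrix.diagonal (fun i => x i / c i)

/-- The Physarum vector `q = W Aᵀ L⁻¹ b` where `L = A W Aᵀ`. -/
noncomputable def physQ {m n : ℕ} (B : Matrix (Fin m) (Fin n) ℝ) (b : Fin m → ℝ)
    (c x : Fin n → ℝ) : Fin n → ℝ :=
  physW c x *ᵥ (Bᵀ *ᵥ ((B * physW c x * Bᵀ)⁻¹ *ᵥ b))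

/-- The set of absolute values of determinants of square submatrices of `A` (as reals). -/
def subdets {m n : ℕ} (A : Matrix (Fin m) (Fin n) ℤ) : Set ℝ :=
  {d | ∃ (k : ℕ) (f : Fin k → Fin m) (g : Fin k → Fin n),
    Function.Injective f ∧ Function.Injective g ∧
    d = |((A.submatrix f g).det : ℝ)|}

/-- `x` is a solution of the Physarum dynamics `ẋ = q - x` on the time set `s`,
staying in the positive orthant. -/
def IsPhysSolOn {m n : ℕ} (B : Matrix (Fin m) (Fin n) ℝ) (b : Fin m → ℝ)
    (c : Fin n → ℝ) (x : ℝ → Fin n → ℝ) (s : Set ℝ) : Prop :=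
  ∀ t ∈ s, (∀ i, 0 < x t i) ∧ HasDerivWithinAt x (physQ B b c (x t) - x t) s t

lemma exp_lemma {m : ℕ} {κ : Type*} [Fintype κ] [DecidableEq κ]
    (g : Fin m → κ → ℝ) (u : κ → Fin m → ℝ) :
    (Matrix.of fun l l' => ∑ t, g l t * u t l').det =
      ∑ ψ : Fin m → κ, (∏ l, g l (ψ l)) * (Matrix.of fun l l' => u (ψ l) l').det := by
  have h0 : (Matrix.of fun l l' => ∑ t, g l t * u t l') = (fun l => ∑ t, g l t • u t) := by
    funext l l'
    simp [Finset.sum_apply]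
  show ((Matrix.detRowAlternating : (Fin m → ℝ) [⋀^Fin m]→ₗ[ℝ] ℝ).toMultilinearMap
      (Matrix.of fun l l' => ∑ t, g l t * u t l')) = _
  rw [h0]
  rw [(Matrix.detRowAlternating : (Fin m → ℝ) [⋀^Fin m]→ₗ[ℝ] ℝ).toMultilinearMap.map_sum
    (g := fun l t => g l t • u t)]
  refine Finset.sum_congr rfl fun ψ _ => ?_
  show (Matrix.detRowAlternating : (Fin m → ℝ) [⋀^Fin m]→ₗ[ℝ] ℝ).toMultilinearMap
      (fun l => g l (ψ l) • u (ψ l)) = _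
  rw [MultilinearMap.map_smul_univ]
  rfl

lemma sign_sum_lemma {m : ℕ} {κ : Type*} (g : Fin m → κ → ℝ) (ψ : Fin m → κ) :
    ∑ σ : Equiv.Perm (Fin m), (Equiv.Perm.sign σ : ℝ) * ∏ l, g l (ψ (σ l)) =
      (Matrix.of fun l l' => g l (ψ l')).det := by
  rw [Matrix.det_apply']
  rw [← Equiv.sum_comp (Equiv.inv (Equiv.Perm (Fin m)))
    (fun σ => (Equiv.Perm.sign σ : ℝ) * ∏ l, (Matrix.of fun l l' => g l (ψ l')) (σ l) l)]
  refine Finset.sum_congr rfl fun σ _ => ?_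
  simp only [Equiv.inv_apply, Equiv.Perm.sign_inv, Matrix.of_apply]
  congr 1
  rw [← Equiv.prod_comp σ (fun l => g (σ⁻¹ l) (ψ l))]
  simp

lemma master {m : ℕ} {κ : Type*} [Fintype κ] [DecidableEq κ]
    (g : Fin m → κ → ℝ) (u : κ → Fin m → ℝ) :
    (m.factorial : ℝ) * (Matrix.of fun l l' => ∑ t, g l t * u t l').det =
      ∑ ψ : Fin m → κ,
        (Matrix.of fun l l' => g l (ψ l')).det * (Matrix.of fun l l' => u (ψ l) l').det := by
  have key : ∀ σ : Equiv.Perm (Fin m), ∀ ψ : Fin m → κ,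
      (∏ l, g l (ψ (σ l))) * (Matrix.of fun l l' => u (ψ (σ l)) l').det =
      ((Equiv.Perm.sign σ : ℝ) * ∏ l, g l (ψ (σ l))) * (Matrix.of fun l l' => u (ψ l) l').det := by
    intro σ ψ
    have : (Matrix.of fun l l' => u (ψ (σ l)) l') =
        (Matrix.of fun l l' => u (ψ l) l').submatrix σ id := rfl
    rw [this, Matrix.det_permute]

    ring
  calc (m.factorial : ℝ) * (Matrix.of fun l l' => ∑ t, g l t * u t l').det
      = ∑ _σ : Equiv.Perm (Fin m), (Matrix.of fun l l' => ∑ t, g l t * u t l').det := by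
        rw [Finset.sum_const, Finset.card_univ, Fintype.card_perm, nsmul_eq_mul]; simp
    _ = ∑ σ : Equiv.Perm (Fin m), ∑ ψ : Fin m → κ,
          (∏ l, g l ((ψ ∘ σ) l)) * (Matrix.of fun l l' => u ((ψ ∘ σ) l) l').det := by
        refine Finset.sum_congr rfl fun σ _ => ?_
        rw [exp_lemma g u]
        exact (Equiv.sum_comp (Equiv.arrowCongr σ.symm (Equiv.refl κ))
          (fun ψ => (∏ l, g l (ψ l)) * (Matrix.of fun l l' => u (ψ l) l').det)).symm
    _ = ∑ ψ : Fin m → κ, ∑ σ : Equiv.Perm (Fin m),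
          ((Equiv.Perm.sign σ : ℝ) * ∏ l, g l (ψ (σ l))) * (Matrix.of fun l l' => u (ψ l) l').det := by
        rw [Finset.sum_comm]
        exact Finset.sum_congr rfl fun ψ _ => Finset.sum_congr rfl fun σ _ => key σ ψ
    _ = ∑ ψ : Fin m → κ,
        (Matrix.of fun l l' => g l (ψ l')).det * (Matrix.of fun l l' => u (ψ l) l').det := by
        refine Finset.sum_congr rfl fun ψ _ => ?_
        rw [← Finset.sum_mul, sign_sum_lemma]

noncomputable def uu {m n : ℕ} (B : Matrix (Fin m) (Fin n) ℝ) (w : Fin n → ℝ)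
    (bR : Fin m → ℝ) : Fin n ⊕ Unit → Fin m → ℝ :=
  Sum.elim (fun j => fun l' => w j * B l' j) (fun _ => bR)

noncomputable def gg {m n : ℕ} (B : Matrix (Fin m) (Fin n) ℝ) (k : Fin m) :
    Fin m → (Fin n ⊕ Unit) → ℝ :=
  fun l => Sum.elim (fun j => if l = k then 0 else B l j) (fun _ => if l = k then 1 else 0)

def pm {m n : ℕ} (ψ : Fin m → Fin n ⊕ Unit) (i : Fin n) : Fin m → Fin n :=
  fun l => Sum.elim id (fun _ => i) (ψ l)

lemma L_eq {m n : ℕ} (B : Matrix (Fin m) (Fin n) ℝ) (w : Fin n → ℝ) :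
    B * Matrix.diagonal w * Bᵀ = Matrix.of fun l l' => ∑ j, B l j * (w j * B l' j) := by
  have h1 : Matrix.diagonal w * Bᵀ = Matrix.of fun j l' => w j * B l' j := by
    ext j l'
    simp [Matrix.diagonal_mul]
  rw [Matrix.mul_assoc, h1]
  ext l l'
  simp [Matrix.mul_apply]

lemma updRow_eq {m n : ℕ} (B : Matrix (Fin m) (Fin n) ℝ) (w : Fin n → ℝ)
    (bR : Fin m → ℝ) (k : Fin m) :
    (B * Matrix.diagonal w * Bᵀ).updateRow k bR =
      Matrix.of fun l l' => ∑ t : Fin n ⊕ Unit, gg B k l t * uu B w bR t l' := by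
  ext l l'
  show _ = ∑ t : Fin n ⊕ Unit, gg B k l t * uu B w bR t l'
  rw [Fintype.sum_sum_type]
  by_cases h : l = k
  · subst h
    simp [Matrix.updateRow_self, gg, uu]
  · rw [Matrix.updateRow_ne h]
    rw [L_eq B w]
    simp [gg, uu, h]
lemma sub_eq1 {m n : ℕ} (B : Matrix (Fin m) (Fin n) ℝ) (ψ : Fin m → Fin n) :
    (Matrix.of fun l l' => B l (ψ l')) = B.submatrix id ψ := rfl

lemma sub_eq2 {m n : ℕ} (B : Matrix (Fin m) (Fin n) ℝ) (w : Fin n → ℝ) (ψ : Fin m → Fin n) :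
    (Matrix.of fun l l' => w (ψ l) * B l' (ψ l)).det = (∏ l, w (ψ l)) * (B.submatrix id ψ).det := by
  rw [show (Matrix.of fun l l' => w (ψ l) * B l' (ψ l)) =
    (Matrix.of fun l l' => (fun x => w (ψ x)) l * (Matrix.of fun a b => B b (ψ a)) l l') from rfl]
  rw [Matrix.det_mul_column]
  congr 1
  rw [show (Matrix.of fun a b => B b (ψ a)) = (B.submatrix id ψ)ᵀ from rfl, Matrix.det_transpose]

lemma symmL {m n : ℕ} (B : Matrix (Fin m) (Fin n) ℝ) (w : Fin n → ℝ)
    (bR : Fin m → ℝ) (k : Fin m) :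
    ((B * Matrix.diagonal w * Bᵀ).updateCol k bR).det =
      ((B * Matrix.diagonal w * Bᵀ).updateRow k bR).det := by
  have hs : (B * Matrix.diagonal w * Bᵀ)ᵀ = B * Matrix.diagonal w * Bᵀ := by
    rw [Matrix.transpose_mul, Matrix.transpose_mul, Matrix.transpose_transpose,
      Matrix.diagonal_transpose, Matrix.mul_assoc]
  conv_lhs => rw [← hs]
  rw [Matrix.updateCol_transpose, Matrix.det_transpose]
-- Case A : no inr
lemma caseA {m n : ℕ} (B : Matrix (Fin m) (Fin n) ℝ) (k : Fin m)
    (ψ : Fin m → Fin n ⊕ Unit) (h : ∀ l, ψ l ≠ Sum.inr ()) :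
    (Matrix.of fun l l' => gg B k l (ψ l')).det = 0 := by
  apply Matrix.det_eq_zero_of_row_eq_zero k
  intro l'
  show gg B k k (ψ l') = 0
  rcases hψ : ψ l' with j | u
  · simp [gg]
  · exact absurd (by cases u; exact hψ) (h l')

-- Case B : two inr's
lemma caseB {m n : ℕ} (B : Matrix (Fin m) (Fin n) ℝ) (w : Fin n → ℝ) (bR : Fin m → ℝ)
    (ψ : Fin m → Fin n ⊕ Unit) {l1 l2 : Fin m} (h12 : l1 ≠ l2)
    (h1 : ψ l1 = Sum.inr ()) (h2 : ψ l2 = Sum.inr ()) :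
    (Matrix.of fun l l' => uu B w bR (ψ l) l').det = 0 := by
  apply Matrix.det_zero_of_row_eq h12
  funext l'
  show uu B w bR (ψ l1) l' = uu B w bR (ψ l2) l'
  rw [h1, h2]

-- Case C, part 1
lemma caseC1 {r n : ℕ} (B : Matrix (Fin (r+1)) (Fin n) ℝ) (i : Fin n)
    (ψ : Fin (r+1) → Fin n ⊕ Unit) (l0 : Fin (r+1)) (hl0 : ψ l0 = Sum.inr ())
    (huniq : ∀ l, ψ l = Sum.inr () → l = l0) :
    ∑ k, B k i * (Matrix.of fun l l' => gg B k l (ψ l')).det =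
      (B.submatrix id (pm ψ i)).det := by
  have hminor : ∀ k : Fin (r+1),
      (Matrix.of fun l l' => gg B k l (ψ l')).submatrix k.succAbove l0.succAbove =
        B.submatrix k.succAbove ((pm ψ i) ∘ l0.succAbove) := by
    intro k
    ext a b
    have hne : l0.succAbove b ≠ l0 := Fin.succAbove_ne l0 b
    have hka : k.succAbove a ≠ k := Fin.succAbove_ne k a
    rcases hψ : ψ (l0.succAbove b) with j | u
    · simp [gg, Matrix.submatrix_apply, hψ, hka, pm, Function.comp]
    · cases u; exact absurd (huniq _ hψ) hne
  have hGk : ∀ k : Fin (r+1), (Matrix.of fun l l' => gg B k l (ψ l')).det =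
      (-1 : ℝ) ^ (k + l0 : ℕ) * (B.submatrix k.succAbove ((pm ψ i) ∘ l0.succAbove)).det := by
    intro k
    rw [Matrix.det_succ_column _ l0]
    rw [Finset.sum_eq_single k]
    · have h1 : (Matrix.of fun l l' => gg B k l (ψ l')) k l0 = 1 := by
        simp [gg, hl0]
      rw [h1, hminor k]
      ring
    · intro l _ hlk
      have h0 : (Matrix.of fun l l' => gg B k l (ψ l')) l l0 = 0 := by
        simp [gg, hl0, hlk]
      rw [h0]; ring
    · intro h; exact absurd (Finset.mem_univ k) h
  have hB : (B.submatrix id (pm ψ i)).det =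
      ∑ k : Fin (r+1), (-1 : ℝ) ^ (k + l0 : ℕ) * B k i *
        (B.submatrix k.succAbove ((pm ψ i) ∘ l0.succAbove)).det := by
    rw [Matrix.det_succ_column _ l0]
    refine Finset.sum_congr rfl fun k _ => ?_
    have h1 : (B.submatrix id (pm ψ i)) k l0 = B k i := by
      simp [Matrix.submatrix_apply, pm, hl0]
    have h2 : (B.submatrix id (pm ψ i)).submatrix k.succAbove l0.succAbove =
        B.submatrix k.succAbove ((pm ψ i) ∘ l0.succAbove) := by
      rw [Matrix.submatrix_submatrix]
      rfl
    rw [h1, h2]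
  rw [hB]
  refine Finset.sum_congr rfl fun k _ => ?_
  rw [hGk k]
  ring

-- Case C, part 2
lemma caseC2 {r n : ℕ} (B : Matrix (Fin (r+1)) (Fin n) ℝ) (w : Fin n → ℝ)
    (bR : Fin (r+1) → ℝ) (i : Fin n)
    (ψ : Fin (r+1) → Fin n ⊕ Unit) (l0 : Fin (r+1)) (hl0 : ψ l0 = Sum.inr ())
    (huniq : ∀ l, ψ l = Sum.inr () → l = l0) :
    (Matrix.of fun l l' => uu B w bR (ψ l) l').det =
      (∏ l, if l = l0 then (1:ℝ) else w (pm ψ i l)) *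
        ((B.submatrix id (pm ψ i)).updateCol l0 bR).det := by
  have key : (Matrix.of fun l l' => uu B w bR (ψ l) l') =
      Matrix.of fun l l' => (fun x => if x = l0 then (1:ℝ) else w (pm ψ i x)) l *
        (((B.submatrix id (pm ψ i)).updateCol l0 bR)ᵀ) l l' := by
    ext l l'
    by_cases h : l = l0
    · subst h
      simp only [Matrix.of_apply, Matrix.transpose_apply, Matrix.updateCol_self, if_pos rfl,
        one_mul, hl0]
      simp [uu]
    · rcases hψ : ψ l with j | u
      · have : pm ψ i l = j := by simp [pm, hψ]
        simp only [Matrix.of_apply, Matrix.transpose_apply, if_neg h, hψ,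
          Matrix.updateCol_ne h, Matrix.submatrix_apply, id_eq, this]
        simp [uu]
      · cases u; exact absurd (huniq _ hψ) h
  rw [key, Matrix.det_mul_column, Matrix.det_transpose]
lemma rmat_submatrix {m n k1 k2 : ℕ} (A : Matrix (Fin m) (Fin n) ℤ)
    (f : Fin k1 → Fin m) (g : Fin k2 → Fin n) :
    (rmat A).submatrix f g = rmat (A.submatrix f g) := rfl

lemma rmat_det {k : ℕ} (M : Matrix (Fin k) (Fin k) ℤ) : (rmat M).det = (M.det : ℝ) :=
  (RingHom.map_det (Int.castRingHom ℝ) M).symm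

lemma abs_det_le {m n k : ℕ} (A : Matrix (Fin m) (Fin n) ℤ) {𝒟 : ℝ}
    (hD : IsGreatest (subdets A) 𝒟) (f : Fin k → Fin m) (g : Fin k → Fin n)
    (hf : Function.Injective f) (hg : Function.Injective g) :
    |((rmat A).submatrix f g).det| ≤ 𝒟 :=
  hD.2 ⟨k, f, g, hf, hg, by rw [rmat_submatrix, rmat_det]⟩

lemma D_ge_one {m n : ℕ} (A : Matrix (Fin m) (Fin n) ℤ) {𝒟 : ℝ}
    (hD : IsGreatest (subdets A) 𝒟) : 1 ≤ 𝒟 := by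
  refine hD.2 ⟨0, Fin.elim0, Fin.elim0, fun a => a.elim0, fun a => a.elim0, ?_⟩
  simp

lemma int_abs_le_sq {m n k : ℕ} (A : Matrix (Fin m) (Fin n) ℤ)
    (f : Fin k → Fin m) (g : Fin k → Fin n) :
    |((rmat A).submatrix f g).det| ≤ ((rmat A).submatrix f g).det ^ 2 := by
  rw [rmat_submatrix, rmat_det]
  set z := (A.submatrix f g).det with hz
  rcases eq_or_ne z 0 with h | h
  · simp [h]
  · have h1 : (1:ℝ) ≤ |(z:ℝ)| := by
      rw [← Int.cast_abs]
      exact_mod_cast Int.one_le_abs h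
    calc |(z:ℝ)| = |(z:ℝ)| * 1 := by ring
    _ ≤ |(z:ℝ)| * |(z:ℝ)| := by nlinarith
    _ = (z:ℝ)^2 := by rw [← abs_mul, ← sq, abs_sq]

lemma updcol_bound {r n : ℕ} (A : Matrix (Fin (r+1)) (Fin n) ℤ) {𝒟 : ℝ}
    (hD : IsGreatest (subdets A) 𝒟) (bR : Fin (r+1) → ℝ)
    (p : Fin (r+1) → Fin n) (l0 : Fin (r+1))
    (hinj : Function.Injective (p ∘ l0.succAbove)) :
    |(((rmat A).submatrix id p).updateCol l0 bR).det| ≤ (∑ k, |bR k|) * 𝒟 := by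
  rw [Matrix.det_succ_column _ l0]
  refine (Finset.abs_sum_le_sum_abs _ _).trans ?_
  rw [Finset.sum_mul]
  refine Finset.sum_le_sum fun k _ => ?_
  have hent : (((rmat A).submatrix id p).updateCol l0 bR) k l0 = bR k :=
    Matrix.updateCol_self
  have hminor : (((rmat A).submatrix id p).updateCol l0 bR).submatrix k.succAbove l0.succAbove
      = (rmat A).submatrix k.succAbove (p ∘ l0.succAbove) := by
    ext a b
    have hne : l0.succAbove b ≠ l0 := Fin.succAbove_ne l0 b
    simp [Matrix.submatrix_apply, Matrix.updateCol_ne hne]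
  rw [hent, hminor, abs_mul, abs_mul]
  have h1 : |(-1 : ℝ) ^ (k + l0 : ℕ)| = 1 := by
    rw [abs_pow, abs_neg, abs_one, one_pow]
  rw [h1, one_mul]
  have h2 : |((rmat A).submatrix k.succAbove (p ∘ l0.succAbove)).det| ≤ 𝒟 :=
    abs_det_le A hD _ _ (Fin.succAbove_right_injective) hinj
  have h3 : (0:ℝ) ≤ |bR k| := abs_nonneg _
  exact mul_le_mul_of_nonneg_left h2 h3

lemma detL_pos {m n : ℕ} (B : Matrix (Fin m) (Fin n) ℝ) (hrank : B.rank = m)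
    (w : Fin n → ℝ) (hw : ∀ j, 0 < w j) :
    0 < (B * Matrix.diagonal w * Bᵀ).det := by
  have hker : ∀ z : Fin m → ℝ, Bᵀ *ᵥ z = 0 → z = 0 := by
    intro z hz
    have hrt : Bᵀ.rank = m := by rw [Matrix.rank_transpose]; exact hrank
    have h := LinearMap.finrank_range_add_finrank_ker (Bᵀ.mulVecLin)
    have hfr : Module.finrank ℝ (LinearMap.range Bᵀ.mulVecLin) = m := hrt
    have hpi : Module.finrank ℝ (Fin m → ℝ) = m := by simp
    have hk0 : Module.finrank ℝ (LinearMap.ker Bᵀ.mulVecLin) = 0 := by omega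
    have hkbot : LinearMap.ker Bᵀ.mulVecLin = ⊥ := Submodule.finrank_eq_zero.1 hk0
    have hzmem : z ∈ LinearMap.ker Bᵀ.mulVecLin := by
      rw [LinearMap.mem_ker, Matrix.mulVecLin_apply]; exact hz
    rw [hkbot, Submodule.mem_bot] at hzmem
    exact hzmem
  have hpd : (B * Matrix.diagonal w * Bᵀ).PosDef := by
    rw [Matrix.posDef_iff_dotProduct_mulVec]
    constructor
    · show (B * Matrix.diagonal w * Bᵀ)ᴴ = _
      have : ∀ (M : Matrix (Fin m) (Fin m) ℝ), Mᴴ = Mᵀ := fun M => rfl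
      rw [this]
      rw [Matrix.transpose_mul, Matrix.transpose_mul, Matrix.transpose_transpose,
        Matrix.diagonal_transpose, Matrix.mul_assoc]
    · intro z hz
      have hstar : star z = z := rfl
      have hcalc : star z ⬝ᵥ (B * Matrix.diagonal w * Bᵀ) *ᵥ z
          = ∑ j, w j * ((Bᵀ *ᵥ z) j)^2 := by
        rw [hstar]
        rw [← Matrix.mulVec_mulVec, ← Matrix.mulVec_mulVec]
        rw [Matrix.dotProduct_mulVec]
        have hvm : z ᵥ* B = Bᵀ *ᵥ z := (Matrix.mulVec_transpose B z).symm
        rw [hvm]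
        simp only [dotProduct, Matrix.mulVec_diagonal]
        exact Finset.sum_congr rfl fun j _ => by ring
      rw [hcalc]
      have hBz : Bᵀ *ᵥ z ≠ 0 := fun h => hz (hker z h)
      have hex : ∃ j, (Bᵀ *ᵥ z) j ≠ 0 := by
        by_contra hc
        push_neg at hc
        exact hBz (funext hc)
      obtain ⟨j0, hj0⟩ := hex
      refine Finset.sum_pos' (fun j _ => ?_) ⟨j0, Finset.mem_univ j0, ?_⟩
      · exact mul_nonneg (hw j).le (sq_nonneg _)
      · exact mul_pos (hw j0) (by positivity)
  exact hpd.det_pos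
theorem q_bound_uniform {m n : ℕ} (A : Matrix (Fin m) (Fin n) ℤ)
    (hrank : (rmat A).rank = m)
    (𝒟 : ℝ) (hD : IsGreatest (subdets A) 𝒟)
    (b : Fin m → ℤ) (c : Fin n → ℤ) (hc : ∀ i, 0 < c i)
    (hfeas : ∃ y : Fin n → ℝ, (rmat A *ᵥ y = fun j => (b j : ℝ)) ∧ ∀ i, 0 ≤ y i)
    (x : Fin n → ℝ) (hx : ∀ i, 0 < x i) :
    ∀ i, |physQ (rmat A) (fun j => (b j : ℝ)) (fun i => (c i : ℝ)) x i| ≤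
      𝒟 ^ 2 * n * ∑ j, |(b j : ℝ)| := by
  classical
  intro i
  set B : Matrix (Fin m) (Fin n) ℝ := rmat A with hB
  set bR : Fin m → ℝ := fun j => (b j : ℝ) with hbR
  set w : Fin n → ℝ := fun i => x i / (c i : ℝ) with hwdef
  have hw : ∀ j, 0 < w j := fun j => div_pos (hx j) (by exact_mod_cast hc j)
  have hD1 : (1:ℝ) ≤ 𝒟 := D_ge_one A hD
  have hbnn : (0:ℝ) ≤ ∑ k, |bR k| := Finset.sum_nonneg fun k _ => abs_nonneg _
  have hq : physQ B bR (fun i => (c i : ℝ)) x i =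
      w i * ∑ k, B k i * ((B * Matrix.diagonal w * Bᵀ)⁻¹ *ᵥ bR) k := by
    show (Matrix.diagonal w *ᵥ (Bᵀ *ᵥ ((B * Matrix.diagonal w * Bᵀ)⁻¹ *ᵥ bR))) i = _
    rw [Matrix.mulVec_diagonal]
    congr 1
    try simp [Matrix.mulVec, Matrix.dotProduct, Matrix.transpose_apply]
  rcases Nat.eq_zero_or_pos m with hm0 | hmpos
  · subst hm0
    rw [hq]
    try simp
    try positivity
  obtain ⟨r, rfl⟩ : ∃ r, m = r + 1 := ⟨m - 1, by omega⟩
  set L : Matrix (Fin (r+1)) (Fin (r+1)) ℝ := B * Matrix.diagonal w * Bᵀ with hLdef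
  have hdetpos : 0 < L.det := detL_pos B hrank w hw
  have hfact : (0:ℝ) < ((r+1).factorial : ℝ) := by positivity
  have hinv : L⁻¹ *ᵥ bR = (L.det)⁻¹ • (fun k => (L.updateCol k bR).det) := by
    have h1 : (fun k => (L.updateCol k bR).det) = Matrix.cramer L bR := by
      funext k; rw [Matrix.cramer_apply]
    rw [Matrix.inv_def, Matrix.smul_mulVec, ← Matrix.cramer_eq_adjugate_mulVec,
      Ring.inverse_eq_inv', h1]
  have hqf : physQ B bR (fun i => (c i : ℝ)) x i =
      w i * (L.det)⁻¹ * ∑ k, B k i * (L.updateCol k bR).det := by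
    rw [hq, hinv]
    rw [Finset.mul_sum, Finset.mul_sum]
    refine Finset.sum_congr rfl fun k _ => ?_
    simp only [Pi.smul_apply, smul_eq_mul]
    ring
  have hNUM : ((r+1).factorial : ℝ) * ∑ k, B k i * (L.updateCol k bR).det =
      ∑ ψ : Fin (r+1) → Fin n ⊕ Unit,
        (∑ k, B k i * (Matrix.of fun l l' => gg B k l (ψ l')).det) *
          (Matrix.of fun l l' => uu B w bR (ψ l) l').det := by
    have hk : ∀ k, ((r+1).factorial : ℝ) * (L.updateCol k bR).det =
        ∑ ψ : Fin (r+1) → Fin n ⊕ Unit,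
          (Matrix.of fun l l' => gg B k l (ψ l')).det *
            (Matrix.of fun l l' => uu B w bR (ψ l) l').det := by
      intro k
      rw [hLdef, symmL, updRow_eq, master]
    calc ((r+1).factorial : ℝ) * ∑ k, B k i * (L.updateCol k bR).det
        = ∑ k, B k i * (((r+1).factorial : ℝ) * (L.updateCol k bR).det) := by
          rw [Finset.mul_sum]; exact Finset.sum_congr rfl fun k _ => by ring
      _ = ∑ k, ∑ ψ : Fin (r+1) → Fin n ⊕ Unit, B k i *
            ((Matrix.of fun l l' => gg B k l (ψ l')).det *
              (Matrix.of fun l l' => uu B w bR (ψ l) l').det) := by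
          refine Finset.sum_congr rfl fun k _ => ?_
          rw [hk k, Finset.mul_sum]
      _ = ∑ ψ : Fin (r+1) → Fin n ⊕ Unit, ∑ k, B k i *
            ((Matrix.of fun l l' => gg B k l (ψ l')).det *
              (Matrix.of fun l l' => uu B w bR (ψ l) l').det) := Finset.sum_comm
      _ = _ := by
          refine Finset.sum_congr rfl fun ψ _ => ?_
          rw [Finset.sum_mul]
          exact Finset.sum_congr rfl fun k _ => by ring
  have hDEN : ((r+1).factorial : ℝ) * L.det =
      ∑ p : Fin (r+1) → Fin n, (∏ l, w (p l)) * (B.submatrix id p).det ^ 2 := by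
    rw [hLdef, L_eq, master B (fun j l' => w j * B l' j)]
    refine Finset.sum_congr rfl fun ψ _ => ?_
    rw [sub_eq1, sub_eq2]
    ring
  set F : (Fin (r+1) → Fin n) → ℝ :=
    fun p => (∏ l, w (p l)) * (B.submatrix id p).det ^ 2 with hFdef
  have hF0 : ∀ p, 0 ≤ F p := fun p =>
    mul_nonneg (Finset.prod_nonneg fun l _ => (hw (p l)).le) (sq_nonneg _)
  set term : (Fin (r+1) → Fin n ⊕ Unit) → ℝ := fun ψ =>
    (∑ k, B k i * (Matrix.of fun l l' => gg B k l (ψ l')).det) *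
      (Matrix.of fun l l' => uu B w bR (ψ l) l').det with htermdef
  set Good : (Fin (r+1) → Fin n ⊕ Unit) → Prop := fun ψ =>
    (∃ l0, ψ l0 = Sum.inr () ∧ ∀ l, ψ l = Sum.inr () → l = l0) ∧
      Function.Injective (pm ψ i) with hGooddef
  set C : ℝ := 𝒟 * ∑ k, |bR k| with hCdef
  have hC0 : 0 ≤ C := mul_nonneg (le_trans zero_le_one hD1) hbnn
  have key1 : ∀ ψ, ¬ Good ψ → term ψ = 0 := by
    intro ψ hbad
    simp only [htermdef]
    by_cases h1 : ∃ l0, ψ l0 = Sum.inr () ∧ ∀ l, ψ l = Sum.inr () → l = l0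
    · obtain ⟨l0, hl0, huniq⟩ := h1
      have hpm : ¬ Function.Injective (pm ψ i) := fun h => by
        apply hbad
        simp only [hGooddef]
        exact ⟨⟨l0, hl0, huniq⟩, h⟩
      obtain ⟨a, b', hab, hne⟩ := Function.not_injective_iff.mp hpm
      have hD0 : (B.submatrix id (pm ψ i)).det = 0 :=
        Matrix.det_zero_of_column_eq hne (fun k => by
          simp [Matrix.submatrix_apply, hab])
      rw [caseC1 B i ψ l0 hl0 huniq, hD0, zero_mul]
    · push_neg at h1
      by_cases h2 : ∃ l0, ψ l0 = Sum.inr ()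
      · obtain ⟨l1, hl1⟩ := h2
        obtain ⟨l2, hl2, hne⟩ := h1 l1 hl1
        rw [caseB B w bR ψ hne hl2 hl1, mul_zero]
      · push_neg at h2
        have hz : ∀ k, (Matrix.of fun l l' => gg B k l (ψ l')).det = 0 := fun k =>
          caseA B k ψ h2
        simp [hz]
  have key2 : ∀ ψ, Good ψ → w i * |term ψ| ≤ C * F (pm ψ i) := by
    intro ψ hg
    simp only [hGooddef] at hg
    obtain ⟨⟨l0, hl0, huniq⟩, hinj⟩ := hg
    have hci : Function.Injective ((pm ψ i) ∘ l0.succAbove) :=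
      hinj.comp (Fin.succAbove_right_injective)
    have hterm : term ψ = (B.submatrix id (pm ψ i)).det *
        ((∏ l, if l = l0 then (1:ℝ) else w (pm ψ i l)) *
          ((B.submatrix id (pm ψ i)).updateCol l0 bR).det) := by
      simp only [htermdef]
      rw [caseC1 B i ψ l0 hl0 huniq, caseC2 B w bR i ψ l0 hl0 huniq]
    have hprodpos : 0 < ∏ l, if l = l0 then (1:ℝ) else w (pm ψ i l) :=
      Finset.prod_pos fun l _ => by
        by_cases h : l = l0
        · simp [h]
        · simp only [if_neg h]; exact hw _
    have hpml0 : pm ψ i l0 = i := by simp [pm, hl0]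
    have hprod : w i * ∏ l, (if l = l0 then (1:ℝ) else w (pm ψ i l)) =
        ∏ l, w (pm ψ i l) := by
      rw [← Finset.mul_prod_erase Finset.univ
          (fun l => if l = l0 then (1:ℝ) else w (pm ψ i l)) (Finset.mem_univ l0),
        ← Finset.mul_prod_erase Finset.univ
          (fun l => w (pm ψ i l)) (Finset.mem_univ l0), hpml0, if_pos rfl]
      rw [Finset.prod_congr rfl
        (fun l hl => if_neg (Finset.ne_of_mem_erase hl) :
          ∀ l ∈ Finset.univ.erase l0,
            (if l = l0 then (1:ℝ) else w (pm ψ i l)) = w (pm ψ i l))]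
      ring
    have hsq : |(B.submatrix id (pm ψ i)).det| ≤ (B.submatrix id (pm ψ i)).det ^ 2 := by
      rw [hB]; exact int_abs_le_sq A _ _
    have hupd : |((B.submatrix id (pm ψ i)).updateCol l0 bR).det| ≤
        (∑ k, |bR k|) * 𝒟 := by
      rw [hB]; exact updcol_bound A hD bR _ l0 hci
    calc w i * |term ψ|
        = (w i * ∏ l, (if l = l0 then (1:ℝ) else w (pm ψ i l))) *
          (|(B.submatrix id (pm ψ i)).det| *
            |((B.submatrix id (pm ψ i)).updateCol l0 bR).det|) := by
          rw [hterm, abs_mul, abs_mul, abs_of_pos hprodpos]; ring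
      _ ≤ (∏ l, w (pm ψ i l)) *
          (((B.submatrix id (pm ψ i)).det ^ 2) * ((∑ k, |bR k|) * 𝒟)) := by
          rw [hprod]
          refine mul_le_mul_of_nonneg_left ?_
            (Finset.prod_nonneg fun l _ => (hw _).le)
          exact mul_le_mul hsq hupd (abs_nonneg _) (sq_nonneg _)
      _ = C * F (pm ψ i) := by
          simp only [hCdef, hFdef]; ring
  have key3 : ∀ ψ1 ψ2, Good ψ1 → Good ψ2 → pm ψ1 i = pm ψ2 i → ψ1 = ψ2 := by
    intro ψ1 ψ2 hg1 hg2 heq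
    simp only [hGooddef] at hg1 hg2
    obtain ⟨⟨l1, hl1, hu1⟩, hi1⟩ := hg1
    obtain ⟨⟨l2, hl2, hu2⟩, hi2⟩ := hg2
    have hl12 : l1 = l2 := by
      apply hi2
      have e1 : pm ψ2 i l1 = i := by
        rw [← heq]; simp [pm, hl1]
      have e2 : pm ψ2 i l2 = i := by simp [pm, hl2]
      rw [e1, e2]
    funext l
    by_cases h : l = l1
    · subst h; rw [hl1, hl12]; exact hl2.symm
    · rcases hψ1 : ψ1 l with j1 | u1
      · rcases hψ2 : ψ2 l with j2 | u2
        · have : j1 = j2 := by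
            have := congrFun heq l
            simpa [pm, hψ1, hψ2] using this
          rw [this]
        · cases u2; exact absurd (hl12 ▸ hu2 l hψ2) h
      · cases u1; exact absurd (hu1 l hψ1) h
  have hsum : ∑ ψ : Fin (r+1) → Fin n ⊕ Unit, w i * |term ψ| ≤
      C * (((r+1).factorial : ℝ) * L.det) := by
    set s : Finset (Fin (r+1) → Fin n ⊕ Unit) :=
      Finset.univ.filter (fun ψ => Good ψ) with hsdef
    have h1 : ∑ ψ : Fin (r+1) → Fin n ⊕ Unit, w i * |term ψ| =
        ∑ ψ ∈ s, w i * |term ψ| := by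
      symm
      apply Finset.sum_subset (Finset.filter_subset _ _)
      intro ψ _ hns
      have hng : ¬ Good ψ := by
        simpa [hsdef, Finset.mem_filter] using hns
      rw [key1 ψ hng, abs_zero, mul_zero]
    have h2 : ∑ ψ ∈ s, w i * |term ψ| ≤ ∑ ψ ∈ s, C * F (pm ψ i) :=
      Finset.sum_le_sum fun ψ hψ => key2 ψ (by
        simpa [hsdef, Finset.mem_filter] using hψ)
    have h3 : ∑ ψ ∈ s, C * F (pm ψ i) =
        ∑ p ∈ s.image (fun ψ => pm ψ i), C * F p :=
      by
        rw [Finset.sum_image (f := fun p => C * F p) (g := fun ψ => pm ψ i)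
          (by
            intro ψ1 hψ1 ψ2 hψ2 heq
            refine key3 ψ1 ψ2 ?_ ?_ heq
            · simpa [hsdef, Finset.mem_filter] using hψ1
            · simpa [hsdef, Finset.mem_filter] using hψ2)]
    have h4 : ∑ p ∈ s.image (fun ψ => pm ψ i), C * F p ≤
        ∑ p : Fin (r+1) → Fin n, C * F p :=
      Finset.sum_le_sum_of_subset_of_nonneg (Finset.subset_univ _)
        (fun p _ _ => mul_nonneg hC0 (hF0 p))
    have h5 : ∑ p : Fin (r+1) → Fin n, C * F p =
        C * (((r+1).factorial : ℝ) * L.det) := by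
      rw [hDEN, Finset.mul_sum]
    linarith
  have habs : w i * |∑ k, B k i * (L.updateCol k bR).det| ≤ C * L.det := by
    have h8 : w i * |∑ ψ : Fin (r+1) → Fin n ⊕ Unit, term ψ| ≤
        ∑ ψ : Fin (r+1) → Fin n ⊕ Unit, w i * |term ψ| := by
      calc w i * |∑ ψ : Fin (r+1) → Fin n ⊕ Unit, term ψ|
          ≤ w i * ∑ ψ : Fin (r+1) → Fin n ⊕ Unit, |term ψ| :=
            mul_le_mul_of_nonneg_left (Finset.abs_sum_le_sum_abs _ _) (hw i).le
        _ = _ := Finset.mul_sum _ _ _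
    have h6 : ((r+1).factorial : ℝ) * (w i * |∑ k, B k i * (L.updateCol k bR).det|) =
        w i * |∑ ψ : Fin (r+1) → Fin n ⊕ Unit, term ψ| := by
      rw [← hNUM, abs_mul, abs_of_pos hfact]; ring
    have h7 : ((r+1).factorial : ℝ) * (w i * |∑ k, B k i * (L.updateCol k bR).det|) ≤
        ((r+1).factorial : ℝ) * (C * L.det) := by
      rw [h6]
      calc w i * |∑ ψ : Fin (r+1) → Fin n ⊕ Unit, term ψ| ≤
            ∑ ψ : Fin (r+1) → Fin n ⊕ Unit, w i * |term ψ| := h8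
        _ ≤ C * (((r+1).factorial : ℝ) * L.det) := hsum
        _ = ((r+1).factorial : ℝ) * (C * L.det) := by ring
    exact le_of_mul_le_mul_left h7 hfact
  have hqb : |physQ B bR (fun i => (c i : ℝ)) x i| ≤ C := by
    rw [hqf, abs_mul, abs_mul, abs_of_pos (hw i), abs_of_pos (inv_pos.mpr hdetpos)]
    calc w i * (L.det)⁻¹ * |∑ k, B k i * (L.updateCol k bR).det|
        = (L.det)⁻¹ * (w i * |∑ k, B k i * (L.updateCol k bR).det|) := by ring
      _ ≤ (L.det)⁻¹ * (C * L.det) :=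
          mul_le_mul_of_nonneg_left habs (inv_pos.mpr hdetpos).le
      _ = C := by field_simp
  refine hqb.trans ?_
  simp only [hCdef]
  have hn1 : (1:ℝ) ≤ n := by
    have := i.pos
    exact_mod_cast this
  show 𝒟 * ∑ k, |bR k| ≤ 𝒟 ^ 2 * n * ∑ j, |bR j|
  have hDn : 𝒟 ≤ 𝒟 ^ 2 * n := by nlinarith [hD1, hn1]
  exact mul_le_mul_of_nonneg_right hDn hbnn
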